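/- arXiv:bayes-an/9609001 — 2 statements merged into one kernel-verified Lean document; each statement's English description precedes it below -/
import Mathlib

section
/- Adjusted orthogonality satisfies the weak union property of a generalised conditional independence relation: let B, C, D, E be random vectors and let (D,E) denote the stacked random vector whose components are those of D followed by those of E. If Cov_E(B,C) = 0 and Cov_E(B,D) = 0, then Cov_{(D,E)}(B,C) = 0, where each subscripted operator uses the Moore–Penrose inverse of the corresponding variance matrix. -/
open MeasureTheory Matrix

variable {Ω : Type*}

/-- The covariance matrix of two random vectors `B` (dimension `m`) and `D` (dimension `n`):
the `(i,j)` entry is `E[Bᵢ·Dⱼ] − E[Bᵢ]·E[Dⱼ]`. -/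
noncomputable def cov [MeasurableSpace Ω] (μ : Measure Ω) {m n : ℕ}
    (B : Fin m → Ω → ℝ) (D : Fin n → Ω → ℝ) : Matrix (Fin m) (Fin n) ℝ :=
  Matrix.of fun i j =>
    (∫ ω, B i ω * D j ω ∂μ) - (∫ ω, B i ω ∂μ) * (∫ ω, D j ω ∂μ)

/-- `W` is a Moore–Penrose inverse of `V`. -/
def IsMoorePenrose {m n : ℕ} (V : Matrix (Fin m) (Fin n) ℝ)
    (W : Matrix (Fin n) (Fin m) ℝ) : Prop :=
  V * W * V = V ∧ W * V * W = W ∧ (V * W)ᵀ = V * W ∧ (W * V)ᵀ = W * V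

/-- The adjusted expectation `E_D(B)` (computed with the matrix `W`, intended to be the
Moore–Penrose inverse of `Var(D)`): the `i`-th component is
`E[Bᵢ] + Σ_j (Cov(B,D)·W)_{ij}·(Dⱼ − E[Dⱼ])`. -/
noncomputable def adjExp [MeasurableSpace Ω] (μ : Measure Ω) {m n : ℕ}
    (B : Fin m → Ω → ℝ) (D : Fin n → Ω → ℝ)
    (W : Matrix (Fin n) (Fin n) ℝ) : Fin m → Ω → ℝ :=
  fun i ω => (∫ ω', B i ω' ∂μ) + ∑ j, (cov μ B D * W) i j * (D j ω - ∫ ω', D j ω' ∂μ)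

/-- The adjusted covariance `Cov_D(B,C) = Cov(B − E_D(B), C − E_D(C))`. -/
noncomputable def adjCov [MeasurableSpace Ω] (μ : Measure Ω) {m p n : ℕ}
    (B : Fin m → Ω → ℝ) (C : Fin p → Ω → ℝ) (D : Fin n → Ω → ℝ)
    (W : Matrix (Fin n) (Fin n) ℝ) : Matrix (Fin m) (Fin p) ℝ :=
  cov μ (fun i ω => B i ω - adjExp μ B D W i ω) (fun j ω => C j ω - adjExp μ C D W j ω)

local notation "⟪" x ", " y "⟫" => @inner ℝ _ _ x y

section Aux

set_option linter.unusedSectionVars false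


variable {Ω : Type*} [MeasurableSpace Ω] {μ : Measure Ω} [IsProbabilityMeasure μ]


noncomputable def ctr (μ : Measure Ω) [IsFiniteMeasure μ] (f : Ω → ℝ) (hf : MemLp f 2 μ) : Lp ℝ 2 μ :=
  hf.toLp f - (memLp_const (∫ ω, f ω ∂μ)).toLp _

theorem ctr_ae {f : Ω → ℝ} (hf : MemLp f 2 μ) :
    ⇑(ctr μ f hf) =ᵐ[μ] fun ω => f ω - ∫ ω', f ω' ∂μ := by
  filter_upwards [Lp.coeFn_sub (hf.toLp f) ((memLp_const (∫ ω, f ω ∂μ)).toLp _),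
    hf.coeFn_toLp, (memLp_const (μ := μ) (∫ ω, f ω ∂μ)).coeFn_toLp] with ω h1 h2 h3
  simp only [ctr, h1, Pi.sub_apply, h2]
  rw [h3]

theorem ctr_congr {f g : Ω → ℝ} (hf : MemLp f 2 μ) (hg : MemLp g 2 μ) (h : f = g) :
    ctr μ f hf = ctr μ g hg := by subst h; rfl

theorem Lp_coeFn_sum {ι : Type*} (s : Finset ι) (f : ι → Lp ℝ 2 μ) :
    ⇑(∑ i ∈ s, f i) =ᵐ[μ] fun ω => ∑ i ∈ s, f i ω := by
  classical
  induction s using Finset.induction_on with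
  | empty => simp only [Finset.sum_empty]; exact Lp.coeFn_zero _ _ _
  | @insert a s hx ih =>
    filter_upwards [Lp.coeFn_add (f a) (∑ i ∈ s, f i), ih] with ω h1 h2
    simp only [Finset.sum_insert hx, h1, Pi.add_apply, h2]

theorem inner_toLp {f g : Ω → ℝ} (hf : MemLp f 2 μ) (hg : MemLp g 2 μ) :
    ⟪hf.toLp f, hg.toLp g⟫ = ∫ ω, f ω * g ω ∂μ := by
  rw [L2.inner_def]
  refine integral_congr_ae ?_
  filter_upwards [hf.coeFn_toLp, hg.coeFn_toLp] with ω h1 h2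
  simp [h1, h2, RCLike.inner_apply, mul_comm]

theorem inner_ctr {f g : Ω → ℝ} (hf : MemLp f 2 μ) (hg : MemLp g 2 μ) :
    ⟪ctr μ f hf, ctr μ g hg⟫ =
      (∫ ω, f ω * g ω ∂μ) - (∫ ω, f ω ∂μ) * (∫ ω, g ω ∂μ) := by
  unfold ctr
  rw [inner_sub_left, inner_sub_right, inner_sub_right,
    inner_toLp, inner_toLp, inner_toLp, inner_toLp]
  simp only [integral_mul_const, integral_const_mul, integral_const, measure_univ, probReal_univ,
    ENNReal.toReal_one, one_smul, smul_eq_mul]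
  ring

theorem cov_inner {m n : ℕ} (B : Fin m → Ω → ℝ) (F : Fin n → Ω → ℝ)
    (hB : ∀ i, MemLp (B i) 2 μ) (hF : ∀ k, MemLp (F k) 2 μ) (i : Fin m) (k : Fin n) :
    cov μ B F i k = ⟪ctr μ (B i) (hB i), ctr μ (F k) (hF k)⟫ :=
  (inner_ctr (hB i) (hF k)).symm

theorem memLp_res {m n : ℕ} (B : Fin m → Ω → ℝ) (F : Fin n → Ω → ℝ)
    (hB : ∀ i, MemLp (B i) 2 μ) (hF : ∀ k, MemLp (F k) 2 μ)
    (W : Matrix (Fin n) (Fin n) ℝ) (i : Fin m) :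
    MemLp (fun ω => B i ω - adjExp μ B F W i ω) 2 μ := by
  have h1 : MemLp (adjExp μ B F W i) 2 μ :=
    (memLp_const (∫ ω', B i ω' ∂μ)).add (memLp_finset_sum (μ := μ) Finset.univ fun k _ =>
      ((hF k).sub (memLp_const _)).const_mul _)
  exact (hB i).sub h1

theorem integral_res {m n : ℕ} (B : Fin m → Ω → ℝ) (F : Fin n → Ω → ℝ)
    (hB : ∀ i, MemLp (B i) 2 μ) (hF : ∀ k, MemLp (F k) 2 μ)
    (W : Matrix (Fin n) (Fin n) ℝ) (i : Fin m) :
    ∫ ω, (B i ω - adjExp μ B F W i ω) ∂μ = 0 := by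
  have hFi : ∀ k, Integrable (fun ω => (cov μ B F * W) i k * (F k ω - ∫ ω', F k ω' ∂μ)) μ :=
    fun k => (((hF k).sub (memLp_const _)).const_mul _).integrable one_le_two
  have hsum : Integrable (fun ω => ∑ k, (cov μ B F * W) i k * (F k ω - ∫ ω', F k ω' ∂μ)) μ :=
    integrable_finset_sum _ fun k _ => hFi k
  have hadj : Integrable (adjExp μ B F W i) μ :=
    ((memLp_const (∫ ω', B i ω' ∂μ)).add (memLp_finset_sum (μ := μ) Finset.univ fun k _ =>
      ((hF k).sub (memLp_const _)).const_mul _)).integrable one_le_two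
  rw [integral_sub ((hB i).integrable one_le_two) hadj]
  have : ∫ ω, adjExp μ B F W i ω ∂μ = ∫ ω', B i ω' ∂μ := by
    unfold adjExp
    rw [integral_add (integrable_const _) hsum, integral_finset_sum _ fun k _ => hFi k]
    have hz : ∀ k : Fin n, ∫ ω, (cov μ B F * W) i k * (F k ω - ∫ ω', F k ω' ∂μ) ∂μ = 0 := by
      intro k
      rw [integral_const_mul, integral_sub ((hF k).integrable one_le_two) (integrable_const _)]
      simp
    simp [hz]
  rw [this, sub_self]

theorem ctr_res {m n : ℕ} (B : Fin m → Ω → ℝ) (F : Fin n → Ω → ℝ)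
    (hB : ∀ i, MemLp (B i) 2 μ) (hF : ∀ k, MemLp (F k) 2 μ)
    (W : Matrix (Fin n) (Fin n) ℝ) (i : Fin m) :
    ctr μ (fun ω => B i ω - adjExp μ B F W i ω) (memLp_res B F hB hF W i) =
      ctr μ (B i) (hB i) - ∑ k, (cov μ B F * W) i k • ctr μ (F k) (hF k) := by
  apply Lp.ext
  have hsm : ∀ᵐ ω ∂μ, ∀ k : Fin n,
      (((cov μ B F * W) i k • ctr μ (F k) (hF k) : Lp ℝ 2 μ) : Ω → ℝ) ω =
        (cov μ B F * W) i k * (F k ω - ∫ ω', F k ω' ∂μ) := by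
    rw [ae_all_iff]
    intro k
    filter_upwards [Lp.coeFn_smul ((cov μ B F * W) i k) (ctr μ (F k) (hF k)), ctr_ae (hF k)]
      with ω h1 h2
    simp [h1, h2]
  filter_upwards [ctr_ae (memLp_res B F hB hF W i), ctr_ae (hB i),
    Lp.coeFn_sub (ctr μ (B i) (hB i)) (∑ k, (cov μ B F * W) i k • ctr μ (F k) (hF k)),
    Lp_coeFn_sum Finset.univ (fun k => (cov μ B F * W) i k • ctr μ (F k) (hF k)),
    hsm] with ω h1 h2 h3 h4 h5
  rw [h1, h3]
  simp only [Pi.sub_apply, h2, h4]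
  rw [integral_res B F hB hF W i]
  simp only [adjExp, h5]
  ring

theorem adjCov_inner {m p n : ℕ} (B : Fin m → Ω → ℝ) (C : Fin p → Ω → ℝ) (F : Fin n → Ω → ℝ)
    (hB : ∀ i, MemLp (B i) 2 μ) (hC : ∀ j, MemLp (C j) 2 μ) (hF : ∀ k, MemLp (F k) 2 μ)
    (W : Matrix (Fin n) (Fin n) ℝ) (i : Fin m) (j : Fin p) :
    adjCov μ B C F W i j =
      ⟪ctr μ (B i) (hB i) - ∑ k, (cov μ B F * W) i k • ctr μ (F k) (hF k),
       ctr μ (C j) (hC j) - ∑ k, (cov μ C F * W) j k • ctr μ (F k) (hF k)⟫ := by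
  rw [show adjCov μ B C F W i j = ⟪ctr μ _ (memLp_res B F hB hF W i),
      ctr μ _ (memLp_res C F hC hF W j)⟫ from
    cov_inner _ _ (memLp_res B F hB hF W) (memLp_res C F hC hF W) i j,
    ctr_res B F hB hF W i, ctr_res C F hC hF W j]

theorem span_zero {H : Type*} [NormedAddCommGroup H] [InnerProductSpace ℝ H] {n : ℕ}
    (f : Fin n → H) (t : Fin n → ℝ) (h : ∀ k, ⟪∑ k', t k' • f k', f k⟫ = 0) :
    ∑ k', t k' • f k' = 0 := by
  rw [← inner_self_eq_zero (𝕜 := ℝ)]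
  rw [inner_sum]
  simp only [real_inner_smul_right]
  simp [h]

theorem ortho_key {H : Type*} [NormedAddCommGroup H] [InnerProductSpace ℝ H] {m n : ℕ}
    (b : Fin m → H) (f : Fin n → H) (A : Matrix (Fin m) (Fin n) ℝ)
    (V W : Matrix (Fin n) (Fin n) ℝ)
    (hA : ∀ i k, A i k = ⟪b i, f k⟫) (hV : ∀ k l, V k l = ⟪f k, f l⟫)
    (hW : V * W * V = V) (i : Fin m) (l : Fin n) :
    ⟪b i - ∑ k, (A * W) i k • f k, f l⟫ = 0 := by
  classical
  set c : Fin n → ℝ := fun k => (1 : Matrix (Fin n) (Fin n) ℝ) k l - (W * V) k l with hc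
  have hcol : ∀ k, ⟪∑ k', c k' • f k', f k⟫ = 0 := by
    intro k
    rw [sum_inner]
    simp only [real_inner_smul_left]
    have hVz : (V * (1 - W * V)) k l = 0 := by
      rw [mul_sub, mul_one, ← Matrix.mul_assoc, hW, sub_self]
      simp
    rw [Matrix.mul_apply] at hVz
    calc ∑ k', c k' * ⟪f k', f k⟫ = ∑ k', V k k' * (1 - W * V) k' l := by
          refine Finset.sum_congr rfl fun k' _ => ?_
          rw [hc]
          simp only [Matrix.sub_apply]
          rw [show ⟪f k', f k⟫ = V k k' from by rw [hV, real_inner_comm]]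
          ring
      _ = 0 := hVz
  have hx : ∑ k', c k' • f k' = 0 := span_zero f c hcol
  have hAc : ∑ k, A i k * c k = 0 := by
    have h0 : ⟪b i, ∑ k', c k' • f k'⟫ = 0 := by rw [hx, inner_zero_right]
    rw [inner_sum] at h0
    simp only [real_inner_smul_right] at h0
    calc ∑ k, A i k * c k = ∑ k, c k * ⟪b i, f k⟫ := by
          refine Finset.sum_congr rfl fun k _ => ?_; rw [hA]; ring
      _ = 0 := h0
  rw [inner_sub_left, sum_inner]
  simp only [real_inner_smul_left]
  have expand : ∑ k, (A * W) i k * ⟪f k, f l⟫ = (A * W * V) i l := by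
    rw [Matrix.mul_apply]
    exact Finset.sum_congr rfl fun k _ => by rw [hV]
  rw [expand, ← hA]
  have h2 : (A * W * V) i l = A i l := by
    have h1 : ∑ k, A i k * c k = A i l - (A * (W * V)) i l := by
      simp only [hc, mul_sub, Finset.sum_sub_distrib, Matrix.mul_apply]
      congr 1
      · simp [Matrix.one_apply, Finset.sum_ite_eq]
    rw [h1] at hAc
    rw [Matrix.mul_assoc]
    linarith
  rw [h2, sub_self]

end Aux


set_option maxHeartbeats 1000000 in
/-- weak union: if `Cov_E(B,C) = 0` and `Cov_E(B,D) = 0`, then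
`Cov_{(D,E)}(B,C) = 0`, where `(D,E)` is the stacked vector `Fin.append D E` and each
subscripted operator uses the Moore–Penrose inverse of the corresponding variance matrix. -/
theorem adjOrth_weak_union [MeasurableSpace Ω] (μ : Measure Ω) [IsProbabilityMeasure μ]
    {mb mc md me : ℕ} (B : Fin mb → Ω → ℝ) (C : Fin mc → Ω → ℝ)
    (D : Fin md → Ω → ℝ) (E : Fin me → Ω → ℝ)
    (hB : ∀ i, Measurable (B i) ∧ MemLp (B i) 2 μ)
    (hC : ∀ i, Measurable (C i) ∧ MemLp (C i) 2 μ)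
    (hD : ∀ i, Measurable (D i) ∧ MemLp (D i) 2 μ)
    (hE : ∀ i, Measurable (E i) ∧ MemLp (E i) 2 μ)
    (WE : Matrix (Fin me) (Fin me) ℝ) (hWE : IsMoorePenrose (cov μ E E) WE)
    (WDE : Matrix (Fin (md + me)) (Fin (md + me)) ℝ)
    (hWDE : IsMoorePenrose (cov μ (Fin.append D E) (Fin.append D E)) WDE)
    (hBC : adjCov μ B C E WE = 0) (hBD : adjCov μ B D E WE = 0) :
    adjCov μ B C (Fin.append D E) WDE = 0 := by
  classical
  have hB2 : ∀ i, MemLp (B i) 2 μ := fun i => (hB i).2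
  have hC2 : ∀ i, MemLp (C i) 2 μ := fun i => (hC i).2
  have hD2 : ∀ i, MemLp (D i) 2 μ := fun i => (hD i).2
  have hE2 : ∀ i, MemLp (E i) 2 μ := fun i => (hE i).2
  have hF2 : ∀ k, MemLp (Fin.append D E k) 2 μ := by
    intro k
    refine Fin.addCases (fun k' => ?_) (fun k' => ?_) k
    · rw [Fin.append_left]; exact hD2 k'
    · rw [Fin.append_right]; exact hE2 k'
  set bL : Fin mb → Lp ℝ 2 μ := fun i => ctr μ (B i) (hB2 i) with hbL
  set cL : Fin mc → Lp ℝ 2 μ := fun j => ctr μ (C j) (hC2 j) with hcL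
  set dL : Fin md → Lp ℝ 2 μ := fun k => ctr μ (D k) (hD2 k) with hdL
  set eL : Fin me → Lp ℝ 2 μ := fun l => ctr μ (E l) (hE2 l) with heL
  set fL : Fin (md + me) → Lp ℝ 2 μ := fun k => ctr μ (Fin.append D E k) (hF2 k) with hfL
  have hfd : ∀ k : Fin md, fL (Fin.castAdd me k) = dL k := fun k =>
    ctr_congr _ _ (Fin.append_left D E k)
  have hfe : ∀ l : Fin me, fL (Fin.natAdd md l) = eL l := fun l =>
    ctr_congr _ _ (Fin.append_right D E l)
  ext i j
  rw [adjCov_inner B C (Fin.append D E) hB2 hC2 hF2 WDE i j]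
  set ρ : Lp ℝ 2 μ := bL i - ∑ k, (cov μ B (Fin.append D E) * WDE) i k • fL k with hρ
  set β : Lp ℝ 2 μ := bL i - ∑ l, (cov μ B E * WE) i l • eL l with hβ
  have h1 : ∀ k, ⟪ρ, fL k⟫ = 0 := fun k =>
    ortho_key bL fL (cov μ B (Fin.append D E)) (cov μ (Fin.append D E) (Fin.append D E)) WDE
      (fun i k => cov_inner B (Fin.append D E) hB2 hF2 i k)
      (fun k l => cov_inner (Fin.append D E) (Fin.append D E) hF2 hF2 k l) hWDE.1 i k
  have h2 : ∀ l, ⟪β, eL l⟫ = 0 := fun l =>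
    ortho_key bL eL (cov μ B E) (cov μ E E) WE
      (fun i k => cov_inner B E hB2 hE2 i k)
      (fun k l => cov_inner E E hE2 hE2 k l) hWE.1 i l
  have h3 : ⟪β, cL j⟫ = 0 := by
    have h0 : adjCov μ B C E WE i j = 0 := by rw [hBC]; rfl
    rw [adjCov_inner B C E hB2 hC2 hE2 WE i j] at h0
    rw [inner_sub_right, inner_sum] at h0
    simp only [real_inner_smul_right] at h0
    rw [← hβ] at h0
    calc ⟪β, cL j⟫ = ⟪β, cL j⟫ - ∑ l, (cov μ C E * WE) j l * ⟪β, eL l⟫ := by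
          simp [h2]
      _ = 0 := h0
  have h4 : ∀ k, ⟪β, dL k⟫ = 0 := by
    intro k
    have h0 : adjCov μ B D E WE i k = 0 := by rw [hBD]; rfl
    rw [adjCov_inner B D E hB2 hD2 hE2 WE i k] at h0
    rw [inner_sub_right, inner_sum] at h0
    simp only [real_inner_smul_right] at h0
    rw [← hβ] at h0
    calc ⟪β, dL k⟫ = ⟪β, dL k⟫ - ∑ l, (cov μ D E * WE) k l * ⟪β, eL l⟫ := by
          simp [h2]
      _ = 0 := h0
  have h5 : ∀ k, ⟪β, fL k⟫ = 0 := by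
    intro k
    refine Fin.addCases (fun k' => ?_) (fun k' => ?_) k
    · rw [hfd]; exact h4 k'
    · rw [hfe]; exact h2 k'
  set w : Fin (md + me) → ℝ := fun k =>
    Fin.append (fun _ : Fin md => (0 : ℝ)) (fun l => (cov μ B E * WE) i l) k
      - (cov μ B (Fin.append D E) * WDE) i k with hw
  have h6 : ρ - β = ∑ k, w k • fL k := by
    have hsplit : ∑ k, (Fin.append (fun _ : Fin md => (0 : ℝ))
        (fun l => (cov μ B E * WE) i l) k) • fL k = ∑ l, (cov μ B E * WE) i l • eL l := by
      rw [Fin.sum_univ_add]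
      simp only [Fin.append_left, Fin.append_right, zero_smul, Finset.sum_const_zero, zero_add]
      exact Finset.sum_congr rfl fun l _ => by rw [hfe]
    simp only [hw, sub_smul, Finset.sum_sub_distrib, hsplit, hρ, hβ]
    abel
  have h7 : ∀ k, ⟪∑ k', w k' • fL k', fL k⟫ = 0 := by
    intro k
    rw [← h6, inner_sub_left, h1, h5, sub_self]
  have h8 : ρ = β := by
    have := span_zero fL w h7
    rw [← h6] at this
    exact sub_eq_zero.mp this
  rw [inner_sub_right, inner_sum]
  simp only [real_inner_smul_right]
  simp only [hfL] at h1 h5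
  simp only [hcL] at h3
  simp only [h1, mul_zero, Finset.sum_const_zero, sub_zero, h8, h3, h5, Matrix.zero_apply]
end

section
/- Adjusted orthogonality satisfies the contraction property of a generalised conditional independence relation: let B, C, D, E be random vectors and let (D,E) denote the stacked random vector whose components are those of D followed by those of E. If Cov_E(B,D) = 0 and Cov_{(D,E)}(B,C) = 0, then Cov_E(B,C) = 0, where each subscripted operator uses the Moore–Penrose inverse of the corresponding variance matrix. -/
open MeasureTheory Matrix

variable {Ω : Type*}

section AuxLemmas

set_option linter.unusedSectionVars false

variable [MeasurableSpace Ω] {μ : Measure Ω} [IsProbabilityMeasure μ]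

/-- Scalar covariance of two random variables. -/
noncomputable def covFn (μ : Measure Ω) (f g : Ω → ℝ) : ℝ :=
  (∫ ω, f ω * g ω ∂μ) - (∫ ω, f ω ∂μ) * (∫ ω, g ω ∂μ)

lemma cov_apply' {m n : ℕ} (B : Fin m → Ω → ℝ) (D : Fin n → Ω → ℝ) (i : Fin m) (j : Fin n) :
    cov μ B D i j = covFn μ (B i) (D j) := rfl

lemma intMul {f g : Ω → ℝ} (hf : MemLp f 2 μ) (hg : MemLp g 2 μ) :
    Integrable (fun ω => f ω * g ω) μ := by
  have h := hf.smul (φ := g) (r := 1) hg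
  · rw [memLp_one_iff_integrable] at h
    exact h.congr (ae_of_all _ fun ω => mul_comm _ _)

lemma intL2 {f : Ω → ℝ} (hf : MemLp f 2 μ) : Integrable f μ := hf.integrable one_le_two

lemma covFn_comm (f g : Ω → ℝ) : covFn μ f g = covFn μ g f := by
  unfold covFn
  have : ∀ ω, f ω * g ω = g ω * f ω := fun ω => mul_comm _ _
  simp_rw [this]; ring

lemma covFn_centered {f g : Ω → ℝ} (hf : MemLp f 2 μ) (hg : MemLp g 2 μ) :
    covFn μ f g = ∫ ω, (f ω - ∫ ω', f ω' ∂μ) * (g ω - ∫ ω', g ω' ∂μ) ∂μ := by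
  set a := ∫ ω', f ω' ∂μ
  set b := ∫ ω', g ω' ∂μ
  have h1 : Integrable (fun ω => f ω * g ω) μ := intMul hf hg
  have hfi := intL2 hf
  have hgi := intL2 hg
  have heq : (fun ω => (f ω - a) * (g ω - b))
      = fun ω => (f ω * g ω - a * g ω) - (b * f ω - a * b) := by
    funext ω; ring
  have i3 : Integrable (fun ω => a * g ω) μ := hgi.const_mul a
  have i4 : Integrable (fun ω => b * f ω) μ := hfi.const_mul b
  have i1 : Integrable (fun ω => f ω * g ω - a * g ω) μ := h1.sub i3
  have i2 : Integrable (fun ω => b * f ω - a * b) μ := i4.sub (integrable_const _)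
  rw [heq, integral_sub i1 i2, integral_sub h1 i3, integral_sub i4 (integrable_const _),
    integral_const_mul, integral_const_mul, integral_const]
  simp [covFn, a, b]
  ring

lemma covFn_zero_of_var_zero {f g : Ω → ℝ} (hf : MemLp f 2 μ) (hg : MemLp g 2 μ)
    (h : covFn μ f f = 0) : covFn μ f g = 0 := by
  set a := ∫ ω', f ω' ∂μ
  have hc : MemLp (fun ω => f ω - a) 2 μ := hf.sub (memLp_const a)
  have hsq : Integrable (fun ω => (f ω - a) * (f ω - a)) μ := intMul hc hc
  have h0 : ∫ ω, (f ω - a) * (f ω - a) ∂μ = 0 := by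
    rw [← covFn_centered hf hf]; exact h
  have hae : (fun ω => (f ω - a) * (f ω - a)) =ᵐ[μ] 0 := by
    rw [← integral_eq_zero_iff_of_nonneg (fun ω => mul_self_nonneg _) hsq]
    exact h0
  rw [covFn_centered hf hg]
  rw [show (0:ℝ) = ∫ (_ : Ω), (0:ℝ) ∂μ by simp]
  apply integral_congr_ae
  filter_upwards [hae] with ω hω
  have h2 : f ω - a = 0 := by
    have := hω; simp only [Pi.zero_apply] at this
    exact mul_self_eq_zero.mp this
  simp [h2]
  exact Or.inl h2

lemma covFn_const_left (c : ℝ) (g : Ω → ℝ) :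
    covFn μ (fun _ => c) g = 0 := by
  unfold covFn
  rw [integral_const_mul, integral_const]
  simp

lemma covFn_smul_left (c : ℝ) (f g : Ω → ℝ) :
    covFn μ (fun ω => c * f ω) g = c * covFn μ f g := by
  unfold covFn
  simp_rw [mul_assoc]
  rw [integral_const_mul, integral_const_mul]
  ring

lemma covFn_sub_left {f f' g : Ω → ℝ} (hf : MemLp f 2 μ) (hf' : MemLp f' 2 μ)
    (hg : MemLp g 2 μ) :
    covFn μ (fun ω => f ω - f' ω) g = covFn μ f g - covFn μ f' g := by
  unfold covFn
  have e1 : (fun ω => (f ω - f' ω) * g ω) = fun ω => f ω * g ω - f' ω * g ω := by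
    funext ω; ring
  rw [e1, integral_sub (intMul hf hg) (intMul hf' hg), integral_sub (intL2 hf) (intL2 hf')]
  ring

lemma covFn_add_left {f f' g : Ω → ℝ} (hf : MemLp f 2 μ) (hf' : MemLp f' 2 μ)
    (hg : MemLp g 2 μ) :
    covFn μ (fun ω => f ω + f' ω) g = covFn μ f g + covFn μ f' g := by
  unfold covFn
  have e1 : (fun ω => (f ω + f' ω) * g ω) = fun ω => f ω * g ω + f' ω * g ω := by
    funext ω; ring
  rw [e1, integral_add (intMul hf hg) (intMul hf' hg), integral_add (intL2 hf) (intL2 hf')]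
  ring

lemma covFn_sum_left {n : ℕ} {Z : Fin n → Ω → ℝ} {g : Ω → ℝ}
    (hZ : ∀ k, MemLp (Z k) 2 μ) (hg : MemLp g 2 μ) :
    covFn μ (fun ω => ∑ k, Z k ω) g = ∑ k, covFn μ (Z k) g := by
  unfold covFn
  have e1 : (fun ω => (∑ k, Z k ω) * g ω) = fun ω => ∑ k, Z k ω * g ω := by
    funext ω; rw [Finset.sum_mul]
  rw [e1, integral_finset_sum _ (fun k _ => intMul (hZ k) hg),
    integral_finset_sum _ (fun k _ => intL2 (hZ k)), Finset.sum_mul,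
    ← Finset.sum_sub_distrib]

lemma memL2_sum {n : ℕ} {Z : Fin n → Ω → ℝ} (hZ : ∀ k, MemLp (Z k) 2 μ) :
    MemLp (fun ω => ∑ k, Z k ω) 2 μ := by
  have := memLp_finset_sum (Finset.univ) (fun k (_ : k ∈ (Finset.univ : Finset (Fin n))) => hZ k)
  simpa using this

lemma mp_unique {m n : ℕ} {V : Matrix (Fin m) (Fin n) ℝ} {W1 W2 : Matrix (Fin n) (Fin m) ℝ}
    (h1 : IsMoorePenrose V W1) (h2 : IsMoorePenrose V W2) : W1 = W2 := by
  obtain ⟨a1, b1, c1, d1⟩ := h1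
  obtain ⟨a2, b2, c2, d2⟩ := h2
  have s1 : V * W1 = V * W2 := by
    calc V * W1 = (V * W1)ᵀ := c1.symm
    _ = W1ᵀ * Vᵀ := transpose_mul _ _
    _ = W1ᵀ * (V * W2 * V)ᵀ := by conv_lhs => rw [← a2]
    _ = W1ᵀ * (Vᵀ * (W2ᵀ * Vᵀ)) := by rw [transpose_mul, transpose_mul]
    _ = (W1ᵀ * Vᵀ) * (W2ᵀ * Vᵀ) := by rw [Matrix.mul_assoc]
    _ = (V * W1)ᵀ * (V * W2)ᵀ := by rw [← transpose_mul, ← transpose_mul]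
    _ = (V * W1) * (V * W2) := by rw [c1, c2]
    _ = (V * W1 * V) * W2 := by rw [Matrix.mul_assoc (V * W1), ← Matrix.mul_assoc]
    _ = V * W2 := by rw [a1]
  have s2 : W1 * V = W2 * V := by
    calc W1 * V = (W1 * V)ᵀ := d1.symm
    _ = Vᵀ * W1ᵀ := transpose_mul _ _
    _ = (V * W2 * V)ᵀ * W1ᵀ := by conv_lhs => rw [← a2]
    _ = (Vᵀ * (W2ᵀ * Vᵀ)) * W1ᵀ := by rw [transpose_mul, transpose_mul]
    _ = (Vᵀ * W2ᵀ) * (Vᵀ * W1ᵀ) := by rw [← Matrix.mul_assoc, ← Matrix.mul_assoc, Matrix.mul_assoc (Vᵀ * W2ᵀ)]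
    _ = (W2 * V)ᵀ * (W1 * V)ᵀ := by rw [← transpose_mul, ← transpose_mul]
    _ = (W2 * V) * (W1 * V) := by rw [d2, d1]
    _ = W2 * (V * W1 * V) := by rw [← Matrix.mul_assoc, Matrix.mul_assoc W2, Matrix.mul_assoc W2]
    _ = W2 * V := by rw [a1]
  calc W1 = W1 * V * W1 := b1.symm
  _ = W1 * (V * W2) := by rw [Matrix.mul_assoc, s1]
  _ = (W1 * V) * W2 := by rw [Matrix.mul_assoc]
  _ = (W2 * V) * W2 := by rw [s2]
  _ = W2 := b2

lemma mp_symm {n : ℕ} {V W : Matrix (Fin n) (Fin n) ℝ} (hV : Vᵀ = V)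
    (h : IsMoorePenrose V W) : Wᵀ = W := by
  obtain ⟨a, b, c, d⟩ := h
  have hWt : IsMoorePenrose V Wᵀ := by
    refine ⟨?_, ?_, ?_, ?_⟩
    · calc V * Wᵀ * V = (Vᵀ * (W * Vᵀ))ᵀ := by
            rw [transpose_mul, transpose_mul, transpose_transpose]
      _ = (Vᵀ * W * Vᵀ)ᵀ := by rw [Matrix.mul_assoc]
      _ = (V * W * V)ᵀ := by rw [hV]
      _ = V := by rw [a, hV]
    · calc Wᵀ * V * Wᵀ = (W * (Vᵀ * W))ᵀ := by
            rw [transpose_mul, transpose_mul, transpose_transpose]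
      _ = (W * Vᵀ * W)ᵀ := by rw [Matrix.mul_assoc]
      _ = (W * V * W)ᵀ := by rw [hV]
      _ = Wᵀ := by rw [b]
    · calc (V * Wᵀ)ᵀ = W * Vᵀ := by rw [transpose_mul, transpose_transpose]
      _ = W * V := by rw [hV]
      _ = (W * V)ᵀ := d.symm
      _ = Vᵀ * Wᵀ := transpose_mul _ _
      _ = V * Wᵀ := by rw [hV]
    · calc (Wᵀ * V)ᵀ = Vᵀ * W := by rw [transpose_mul, transpose_transpose]
      _ = V * W := by rw [hV]
      _ = (V * W)ᵀ := c.symm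
      _ = Wᵀ * Vᵀ := transpose_mul _ _
      _ = Wᵀ * V := by rw [hV]
  exact mp_unique hWt ⟨a, b, c, d⟩

lemma cov_transpose {m n : ℕ} (X : Fin m → Ω → ℝ) (Y : Fin n → Ω → ℝ) :
    (cov μ X Y)ᵀ = cov μ Y X := by
  ext i j
  rw [transpose_apply, cov_apply', cov_apply', covFn_comm]

lemma memL2_lin {n : ℕ} {Z : Fin n → Ω → ℝ} (hZ : ∀ k, MemLp (Z k) 2 μ) (u : Fin n → ℝ) :
    MemLp (fun ω => ∑ k, u k * Z k ω) 2 μ :=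
  memL2_sum (fun k => (hZ k).const_mul (u k))

lemma covFn_lin_left {n : ℕ} {Z : Fin n → Ω → ℝ} {g : Ω → ℝ}
    (hZ : ∀ k, MemLp (Z k) 2 μ) (hg : MemLp g 2 μ) (u : Fin n → ℝ) :
    covFn μ (fun ω => ∑ k, u k * Z k ω) g = ∑ k, u k * covFn μ (Z k) g := by
  rw [covFn_sum_left (fun k => (hZ k).const_mul (u k)) hg]
  exact Finset.sum_congr rfl fun k _ => covFn_smul_left _ _ _

lemma cov_vec_zero {m n : ℕ} {X : Fin m → Ω → ℝ} {Z : Fin n → Ω → ℝ}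
    (hX : ∀ i, MemLp (X i) 2 μ) (hZ : ∀ k, MemLp (Z k) 2 μ) (u : Fin n → ℝ)
    (hu : ∀ k, ∑ l, cov μ Z Z k l * u l = 0) (i : Fin m) :
    ∑ k, cov μ X Z i k * u k = 0 := by
  set s : Ω → ℝ := fun ω => ∑ k, u k * Z k ω with hs_def
  have hs : MemLp s 2 μ := memL2_lin hZ u
  have hfs : ∀ f, MemLp f 2 μ → covFn μ f s = ∑ k, u k * covFn μ f (Z k) := by
    intro f hf
    rw [covFn_comm f s, hs_def, covFn_lin_left hZ hf u]
    exact Finset.sum_congr rfl fun k _ => by rw [covFn_comm]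
  have hss : covFn μ s s = 0 := by
    rw [hfs s hs]
    have hk : ∀ k, covFn μ s (Z k) = 0 := by
      intro k
      rw [covFn_comm, hfs (Z k) (hZ k)]
      have := hu k
      calc (∑ l, u l * covFn μ (Z k) (Z l)) = ∑ l, cov μ Z Z k l * u l :=
        Finset.sum_congr rfl fun l _ => by rw [cov_apply', mul_comm]
      _ = 0 := hu k
    simp [hk]
  have h0 : covFn μ (X i) s = 0 := by
    rw [covFn_comm]; exact covFn_zero_of_var_zero hs (hX i) hss
  calc ∑ k, cov μ X Z i k * u k = ∑ k, u k * covFn μ (X i) (Z k) :=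
    Finset.sum_congr rfl fun k _ => by rw [cov_apply', mul_comm]
  _ = covFn μ (X i) s := (hfs (X i) (hX i)).symm
  _ = 0 := h0

lemma cov_mp_range {m n : ℕ} {X : Fin m → Ω → ℝ} {Z : Fin n → Ω → ℝ}
    (hX : ∀ i, MemLp (X i) 2 μ) (hZ : ∀ k, MemLp (Z k) 2 μ)
    {W : Matrix (Fin n) (Fin n) ℝ} (hW : IsMoorePenrose (cov μ Z Z) W) :
    cov μ X Z * W * cov μ Z Z = cov μ X Z := by
  set V := cov μ Z Z with hV
  have hz : V * (W * V - 1) = 0 := by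
    rw [Matrix.mul_sub, Matrix.mul_one, ← Matrix.mul_assoc, hW.1, sub_self]
  have hcol : ∀ j k, ∑ l, cov μ Z Z k l * (W * V - 1) l j = 0 := by
    intro j k
    have h1 : (V * (W * V - 1)) k j = 0 := by rw [hz]; rfl
    rw [Matrix.mul_apply] at h1
    exact h1
  have hmain : cov μ X Z * (W * V - 1) = 0 := by
    ext i j
    have := cov_vec_zero hX hZ (fun l => (W * V - 1) l j) (hcol j) i
    rw [Matrix.mul_apply]
    exact this
  rw [Matrix.mul_sub, Matrix.mul_one, sub_eq_zero] at hmain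
  rw [Matrix.mul_assoc]
  exact hmain

lemma memL2_adjExp {m n : ℕ} (X : Fin m → Ω → ℝ) (Z : Fin n → Ω → ℝ)
    (W : Matrix (Fin n) (Fin n) ℝ) (hZ : ∀ k, MemLp (Z k) 2 μ) (i : Fin m) :
    MemLp (fun ω => adjExp μ X Z W i ω) 2 μ := by
  have h : MemLp (fun ω => ∑ k, (cov μ X Z * W) i k * (Z k ω - ∫ ω', Z k ω' ∂μ)) 2 μ :=
    memL2_sum (fun k => ((hZ k).sub (memLp_const _)).const_mul _)
  exact (memLp_const (∫ ω', X i ω' ∂μ)).add h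

lemma covFn_adjExp_left {m n : ℕ} (X : Fin m → Ω → ℝ) (Z : Fin n → Ω → ℝ)
    (W : Matrix (Fin n) (Fin n) ℝ) {g : Ω → ℝ}
    (hZ : ∀ k, MemLp (Z k) 2 μ) (hg : MemLp g 2 μ) (i : Fin m) :
    covFn μ (fun ω => adjExp μ X Z W i ω) g
      = ∑ k, (cov μ X Z * W) i k * covFn μ (Z k) g := by
  have hsum : MemLp (fun ω => ∑ k, (cov μ X Z * W) i k * (Z k ω - ∫ ω', Z k ω' ∂μ)) 2 μ :=
    memL2_sum (fun k => ((hZ k).sub (memLp_const _)).const_mul _)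
  have e : (fun ω => adjExp μ X Z W i ω)
      = fun ω => (∫ ω', X i ω' ∂μ)
        + ∑ k, (cov μ X Z * W) i k * (Z k ω - ∫ ω', Z k ω' ∂μ) := rfl
  rw [e, covFn_add_left (memLp_const _) hsum hg, covFn_const_left, zero_add,
    covFn_sum_left (Z := fun k ω => (cov μ X Z * W) i k * (Z k ω - ∫ ω', Z k ω' ∂μ))
      (fun k => ((hZ k).sub (memLp_const _)).const_mul _) hg]
  refine Finset.sum_congr rfl fun k _ => ?_
  rw [covFn_smul_left]
  congr 1
  rw [covFn_sub_left (hZ k) (memLp_const _) hg, covFn_const_left, sub_zero]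

lemma covFn_resid_left {m n : ℕ} (X : Fin m → Ω → ℝ) (Z : Fin n → Ω → ℝ)
    (W : Matrix (Fin n) (Fin n) ℝ) {g : Ω → ℝ}
    (hX : ∀ i, MemLp (X i) 2 μ) (hZ : ∀ k, MemLp (Z k) 2 μ) (hg : MemLp g 2 μ) (i : Fin m) :
    covFn μ (fun ω => X i ω - adjExp μ X Z W i ω) g
      = covFn μ (X i) g - ∑ k, (cov μ X Z * W) i k * covFn μ (Z k) g := by
  rw [covFn_sub_left (hX i) (memL2_adjExp X Z W hZ i) hg, covFn_adjExp_left X Z W hZ hg i]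

lemma adjCov_expand {m p n : ℕ} (X : Fin m → Ω → ℝ) (Y : Fin p → Ω → ℝ) (Z : Fin n → Ω → ℝ)
    (hX : ∀ i, MemLp (X i) 2 μ) (hY : ∀ j, MemLp (Y j) 2 μ) (hZ : ∀ k, MemLp (Z k) 2 μ)
    (W : Matrix (Fin n) (Fin n) ℝ) :
    adjCov μ X Y Z W = cov μ X Y - cov μ X Z * (cov μ Y Z * W)ᵀ
      - (cov μ X Z * W) * cov μ Z Y + (cov μ X Z * W) * cov μ Z Z * (cov μ Y Z * W)ᵀ := by
  set PX := cov μ X Z * W with hPX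
  set PY := cov μ Y Z * W with hPYdef
  ext i j
  have hresY : MemLp (fun ω => Y j ω - adjExp μ Y Z W j ω) 2 μ :=
    (hY j).sub (memL2_adjExp Y Z W hZ j)
  have hstep : ∀ (f : Ω → ℝ), MemLp f 2 μ →
      covFn μ f (fun ω => Y j ω - adjExp μ Y Z W j ω)
        = covFn μ f (Y j) - ∑ l, PY j l * covFn μ f (Z l) := by
    intro f hf
    rw [covFn_comm, covFn_resid_left Y Z W hY hZ hf j, covFn_comm]
    congr 1
    exact Finset.sum_congr rfl fun l _ => by rw [covFn_comm]
  have hL : adjCov μ X Y Z W i j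
      = (covFn μ (X i) (Y j) - ∑ l, PY j l * covFn μ (X i) (Z l))
        - ∑ k, PX i k * (covFn μ (Z k) (Y j) - ∑ l, PY j l * covFn μ (Z k) (Z l)) := by
    show covFn μ (fun ω => X i ω - adjExp μ X Z W i ω)
        (fun ω => Y j ω - adjExp μ Y Z W j ω) = _
    rw [covFn_resid_left X Z W hX hZ hresY i, hstep (X i) (hX i)]
    congr 1
    exact Finset.sum_congr rfl fun k _ => by rw [hstep (Z k) (hZ k)]
  rw [hL]
  simp only [Matrix.sub_apply, Matrix.add_apply, Matrix.mul_apply, Matrix.transpose_apply,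
    cov_apply']
  have e1 : (∑ l, PY j l * covFn μ (X i) (Z l)) = ∑ l, covFn μ (X i) (Z l) * PY j l :=
    Finset.sum_congr rfl fun l _ => mul_comm _ _
  have e2 : (∑ k, PX i k * (covFn μ (Z k) (Y j) - ∑ l, PY j l * covFn μ (Z k) (Z l)))
      = (∑ k, PX i k * covFn μ (Z k) (Y j))
        - ∑ k, PX i k * ∑ l, PY j l * covFn μ (Z k) (Z l) := by
    rw [← Finset.sum_sub_distrib]
    exact Finset.sum_congr rfl fun k _ => mul_sub _ _ _
  have e3 : (∑ k, PX i k * ∑ l, PY j l * covFn μ (Z k) (Z l))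
      = ∑ l, (∑ k, PX i k * covFn μ (Z k) (Z l)) * PY j l := by
    simp_rw [Finset.mul_sum]
    rw [Finset.sum_comm]
    refine Finset.sum_congr rfl fun l _ => ?_
    rw [Finset.sum_mul]
    exact Finset.sum_congr rfl fun k _ => by ring
  rw [e1, e2, e3]
  ring

lemma adjCov_schur {m p n : ℕ} (X : Fin m → Ω → ℝ) (Y : Fin p → Ω → ℝ) (Z : Fin n → Ω → ℝ)
    (hX : ∀ i, MemLp (X i) 2 μ) (hY : ∀ j, MemLp (Y j) 2 μ) (hZ : ∀ k, MemLp (Z k) 2 μ)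
    {W : Matrix (Fin n) (Fin n) ℝ} (hW : IsMoorePenrose (cov μ Z Z) W) :
    adjCov μ X Y Z W = cov μ X Y - cov μ X Z * W * cov μ Z Y := by
  have hWs : Wᵀ = W := mp_symm (cov_transpose Z Z) hW
  rw [adjCov_expand X Y Z hX hY hZ W]
  have hPYt : (cov μ Y Z * W)ᵀ = W * cov μ Z Y := by
    rw [transpose_mul, hWs, cov_transpose]
  rw [hPYt]
  have h2 : cov μ X Z * W * cov μ Z Z * (W * cov μ Z Y) = cov μ X Z * W * cov μ Z Y := by
    calc cov μ X Z * W * cov μ Z Z * (W * cov μ Z Y)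
        = cov μ X Z * (W * cov μ Z Z * W) * cov μ Z Y := by
          rw [Matrix.mul_assoc (cov μ X Z) W (cov μ Z Z),
            ← Matrix.mul_assoc (cov μ X Z * (W * cov μ Z Z)) W (cov μ Z Y),
            Matrix.mul_assoc (cov μ X Z) (W * cov μ Z Z) W]
    _ = cov μ X Z * W * cov μ Z Y := by rw [hW.2.1]
  have h3 : cov μ X Z * (W * cov μ Z Y) = cov μ X Z * W * cov μ Z Y := by
    rw [← Matrix.mul_assoc]
  rw [h2, h3]
  abel

end AuxLemmas

/-- contraction: if `Cov_E(B,D) = 0` and `Cov_{(D,E)}(B,C) = 0`, then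
`Cov_E(B,C) = 0`, where `(D,E)` is the stacked vector `Fin.append D E` and each
subscripted operator uses the Moore–Penrose inverse of the corresponding variance matrix. -/
theorem adjOrth_contraction [MeasurableSpace Ω] (μ : Measure Ω) [IsProbabilityMeasure μ]
    {mb mc md me : ℕ} (B : Fin mb → Ω → ℝ) (C : Fin mc → Ω → ℝ)
    (D : Fin md → Ω → ℝ) (E : Fin me → Ω → ℝ)
    (hB : ∀ i, Measurable (B i) ∧ MemLp (B i) 2 μ)
    (hC : ∀ i, Measurable (C i) ∧ MemLp (C i) 2 μ)
    (hD : ∀ i, Measurable (D i) ∧ MemLp (D i) 2 μ)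
    (hE : ∀ i, Measurable (E i) ∧ MemLp (E i) 2 μ)
    (WE : Matrix (Fin me) (Fin me) ℝ) (hWE : IsMoorePenrose (cov μ E E) WE)
    (WDE : Matrix (Fin (md + me)) (Fin (md + me)) ℝ)
    (hWDE : IsMoorePenrose (cov μ (Fin.append D E) (Fin.append D E)) WDE)
    (hBD : adjCov μ B D E WE = 0) (hBC : adjCov μ B C (Fin.append D E) WDE = 0) :
    adjCov μ B C E WE = 0 := by
  have hB2 : ∀ i, MemLp (B i) 2 μ := fun i => (hB i).2
  have hC2 : ∀ i, MemLp (C i) 2 μ := fun i => (hC i).2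
  have hD2 : ∀ i, MemLp (D i) 2 μ := fun i => (hD i).2
  have hE2 : ∀ i, MemLp (E i) 2 μ := fun i => (hE i).2
  have hF2 : ∀ i, MemLp (Fin.append D E i) 2 μ := by
    intro i
    refine Fin.addCases (fun j => ?_) (fun j => ?_) i
    · simpa [Fin.append_left] using hD2 j
    · simpa [Fin.append_right] using hE2 j
  -- rewrite hypotheses and goal in Schur form
  rw [adjCov_schur B D E hB2 hD2 hE2 hWE, sub_eq_zero] at hBD
  rw [adjCov_schur B C (Fin.append D E) hB2 hC2 hF2 hWDE, sub_eq_zero] at hBC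
  rw [adjCov_schur B C E hB2 hC2 hE2 hWE, sub_eq_zero]
  -- range facts
  have rBE : cov μ B E * WE * cov μ E E = cov μ B E := cov_mp_range hB2 hE2 hWE
  have rCF : cov μ C (Fin.append D E) * WDE * cov μ (Fin.append D E) (Fin.append D E)
      = cov μ C (Fin.append D E) := cov_mp_range hC2 hF2 hWDE
  have hWDEs : WDEᵀ = WDE := mp_symm (cov_transpose (Fin.append D E) (Fin.append D E)) hWDE
  -- block fact 1 : cov B F = (cov B E * WE) * cov E F
  have blk1 : cov μ B (Fin.append D E)
      = (cov μ B E * WE) * cov μ E (Fin.append D E) := by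
    ext i j
    refine Fin.addCases (fun j' => ?_) (fun j' => ?_) j
    · have h1' := congr_fun (congr_fun hBD i) j'
      simp only [Matrix.mul_apply] at h1' ⊢
      simpa [cov_apply', Fin.append_left] using h1'
    · have h2' := congr_fun (congr_fun rBE.symm i) j'
      simp only [Matrix.mul_apply] at h2' ⊢
      simpa [cov_apply', Fin.append_right] using h2'
  -- s1 : cov F F * (WDE * cov F C) = cov F C
  have s1 : cov μ (Fin.append D E) (Fin.append D E) * (WDE * cov μ (Fin.append D E) C)
      = cov μ (Fin.append D E) C := by
    have h := congrArg Matrix.transpose rCF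
    rw [transpose_mul, transpose_mul, hWDEs, cov_transpose, cov_transpose] at h
    exact h
  -- block fact 2 : cov E F * WDE * cov F C = cov E C
  have blk2 : cov μ E (Fin.append D E) * WDE * cov μ (Fin.append D E) C = cov μ E C := by
    ext i j
    rw [Matrix.mul_assoc, Matrix.mul_apply]
    have e1 : ∑ k, cov μ E (Fin.append D E) i k * (WDE * cov μ (Fin.append D E) C) k j
        = ∑ k, cov μ (Fin.append D E) (Fin.append D E) (Fin.natAdd md i) k
            * (WDE * cov μ (Fin.append D E) C) k j := by
      refine Finset.sum_congr rfl fun k _ => ?_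
      simp [cov_apply', Fin.append_right]
    rw [e1, ← Matrix.mul_apply, s1]
    simp [cov_apply', Fin.append_right]
  -- assemble
  calc cov μ B C
      = cov μ B (Fin.append D E) * WDE * cov μ (Fin.append D E) C := hBC
  _ = (cov μ B E * WE) * (cov μ E (Fin.append D E) * WDE * cov μ (Fin.append D E) C) := by
      rw [blk1, Matrix.mul_assoc (cov μ B E * WE), Matrix.mul_assoc (cov μ B E * WE)]
  _ = (cov μ B E * WE) * cov μ E C := by rw [blk2]
  _ = cov μ B E * WE * cov μ E C := rfl
end
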